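/- (Proposition 2: the region formed by finitely many zeroth-order cuts is a relaxation of the original feasible region.) Let d : ℕ, L ≥ 0, μ > 0 and ε ≥ 0, and let φ : EuclideanSpace ℝ (Fin d) → ℝ have L-Lipschitz gradient. Let w₁, …, w_m be finitely many cut-generation points and, for each l, set g_l := ∫ ∇φ(w_l + μ • u) ∂γ_d(u). Then {w | φ(w) = 0} ⊆ ⋂_{l=1}^{m} {w | φ(w_l) + ⟪g_l, w − w_l⟫ − ((L+1)/2)·‖w − w_l‖² − (μ²/8)·L²·(d+3)³ ≤ ε}. In particular, the feasible region formed by the zeroth-order cuts always contains the original feasible region {w | φ(w) = 0}, and it can only shrink (is monotonically tightened) as additional cuts are added. -/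

import Mathlib

open MeasureTheory RealInnerProductSpace

/-- The standard Gaussian measure on `EuclideanSpace ℝ (Fin d)`, i.e. the product of `d`
copies of the real standard Gaussian measure. -/
noncomputable def stdGaussian (d : ℕ) : Measure (EuclideanSpace ℝ (Fin d)) :=
  (Measure.pi (fun _ : Fin d => ProbabilityTheory.gaussianReal 0 1)).map (WithLp.toLp 2)

open ProbabilityTheory Real in
lemma aux_pdf_mul_abs_le (x : ℝ) :
    gaussianPDFReal 0 1 x * |x| ≤ (√(2 * π))⁻¹ * (1.2 * rexp (-(1/4) * x ^ 2)) := by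
  have hpdf : gaussianPDFReal 0 1 x = (√(2 * π))⁻¹ * rexp (-(1/2) * x ^ 2) := by
    simp only [gaussianPDFReal, NNReal.coe_one, mul_one, sub_zero]
    ring_nf
  have habs : |x| ≤ 1.2 * rexp (x ^ 2 / 4) := by
    have h8 : x ^ 2 / 8 + 1 ≤ rexp (x ^ 2 / 8) := Real.add_one_le_exp _
    have hsq : (x ^ 2 / 8 + 1) ^ 2 ≤ rexp (x ^ 2 / 4) := by
      have h1 : (x ^ 2 / 8 + 1) ^ 2 ≤ rexp (x ^ 2 / 8) ^ 2 :=
        pow_le_pow_left₀ (by positivity) h8 2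
      have h2 : rexp (x ^ 2 / 8) ^ 2 = rexp (x ^ 2 / 4) := by
        rw [sq, ← Real.exp_add]; ring_nf
      linarith [h1, h2.le, h2.ge]
    have hpoly : |x| ≤ 1.2 * (x ^ 2 / 8 + 1) ^ 2 := by
      nlinarith [sq_nonneg (|x| - 5/3), sq_abs x, sq_nonneg (x * x), abs_nonneg x]
    nlinarith [hpoly, hsq]
  have hposinv : (0:ℝ) ≤ (√(2 * π))⁻¹ := by positivity
  rw [hpdf]
  have key : rexp (-(1/2) * x ^ 2) * |x| ≤ 1.2 * rexp (-(1/4) * x ^ 2) := by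
    have hE : rexp (-(1/4) * x ^ 2) = rexp (x ^ 2 / 4) * rexp (-(1/2) * x ^ 2) := by
      rw [← Real.exp_add]; ring_nf
    rw [hE]
    have := mul_le_mul_of_nonneg_right habs (Real.exp_pos (-(1/2) * x ^ 2)).le
    nlinarith [this]
  calc (√(2 * π))⁻¹ * rexp (-(1/2) * x ^ 2) * |x|
      = (√(2 * π))⁻¹ * (rexp (-(1/2) * x ^ 2) * |x|) := by ring
    _ ≤ (√(2 * π))⁻¹ * (1.2 * rexp (-(1/4) * x ^ 2)) :=
        mul_le_mul_of_nonneg_left key hposinv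

open ProbabilityTheory Real in
lemma aux_gaussian_withDensity :
    gaussianReal 0 1 =
      volume.withDensity (fun x => ((gaussianPDFReal 0 1 x).toNNReal : ENNReal)) := by
  rw [gaussianReal_of_var_ne_zero 0 one_ne_zero]
  rfl

open ProbabilityTheory Real in
lemma aux_dom_integrable :
    Integrable (fun x : ℝ => (√(2 * π))⁻¹ * (1.2 * rexp (-(1/4) * x ^ 2))) volume :=
  ((integrable_exp_neg_mul_sq (by norm_num : (0:ℝ) < 1/4)).const_mul 1.2).const_mul _

open ProbabilityTheory Real in
lemma aux_pdf_mul_abs_integrable :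
    Integrable (fun x : ℝ => gaussianPDFReal 0 1 x * |x|) volume := by
  refine aux_dom_integrable.mono'
    (((measurable_gaussianPDFReal 0 1).mul measurable_abs).aestronglyMeasurable) ?_
  refine Filter.Eventually.of_forall fun x => ?_
  rw [Real.norm_eq_abs, abs_of_nonneg (mul_nonneg (gaussianPDFReal_nonneg 0 1 x) (abs_nonneg x))]
  exact aux_pdf_mul_abs_le x

open ProbabilityTheory Real in
lemma gaussian_abs_integrable : Integrable (fun x : ℝ => |x|) (gaussianReal 0 1) := by
  rw [aux_gaussian_withDensity,
    integrable_withDensity_iff_integrable_smul ((measurable_gaussianPDFReal 0 1).real_toNNReal)]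
  have : (fun x : ℝ => (gaussianPDFReal 0 1 x).toNNReal • |x|)
      = fun x : ℝ => gaussianPDFReal 0 1 x * |x| := by
    funext x
    rw [NNReal.smul_def, Real.coe_toNNReal _ (gaussianPDFReal_nonneg 0 1 x), smul_eq_mul]
  rw [this]
  exact aux_pdf_mul_abs_integrable

open ProbabilityTheory Real in
lemma gaussian_abs_integral_le : ∫ x, |x| ∂(gaussianReal 0 1) ≤ 2 := by
  rw [aux_gaussian_withDensity,
    integral_withDensity_eq_integral_smul ((measurable_gaussianPDFReal 0 1).real_toNNReal)]
  have heq : (fun x : ℝ => (gaussianPDFReal 0 1 x).toNNReal • |x|)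
      = fun x : ℝ => gaussianPDFReal 0 1 x * |x| := by
    funext x
    rw [NNReal.smul_def, Real.coe_toNNReal _ (gaussianPDFReal_nonneg 0 1 x), smul_eq_mul]
  rw [heq]
  have h1 : ∫ x, gaussianPDFReal 0 1 x * |x|
      ≤ ∫ x : ℝ, (√(2 * π))⁻¹ * (1.2 * rexp (-(1/4) * x ^ 2)) :=
    integral_mono aux_pdf_mul_abs_integrable aux_dom_integrable aux_pdf_mul_abs_le
  have h2 : ∫ x : ℝ, (√(2 * π))⁻¹ * (1.2 * rexp (-(1/4) * x ^ 2))
      = (√(2 * π))⁻¹ * (1.2 * (2 * √π)) := by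
    rw [integral_const_mul, integral_const_mul, integral_gaussian]
    congr 1
    congr 1
    rw [show π / (1/4) = 4 * π by ring, Real.sqrt_mul (by norm_num) π,
      show (4:ℝ) = 2 ^ 2 by norm_num, Real.sqrt_sq (by norm_num : (0:ℝ) ≤ 2)]
  have hπ : 0 < √π := Real.sqrt_pos.mpr Real.pi_pos
  have h2π : √(2 * π) = √2 * √π := Real.sqrt_mul (by norm_num) π
  have hs2 : (1.2:ℝ) ≤ √2 := by
    rw [show (2:ℝ) = 1.2 ^ 2 + 0.56 by norm_num]
    nlinarith [Real.sq_sqrt (show (0:ℝ) ≤ 1.2 ^ 2 + 0.56 by norm_num),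
      Real.sqrt_nonneg (1.2 ^ 2 + 0.56)]
  have hs2pos : (0:ℝ) < √2 := by positivity
  have h3 : (√(2 * π))⁻¹ * (1.2 * (2 * √π)) ≤ 2 := by
    rw [h2π, inv_mul_le_iff₀ (by positivity)]
    nlinarith [hs2, hπ, hs2pos]
  linarith [h1, h2.le, h2.ge, h3]

instance stdGaussian_isProbabilityMeasure (d : ℕ) :
    IsProbabilityMeasure (stdGaussian d) :=
  Measure.isProbabilityMeasure_map (WithLp.measurable_toLp 2 _).aemeasurable

open ProbabilityTheory in
lemma stdGaussian_map_eval (d : ℕ) (i : Fin d) :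
    (stdGaussian d).map (fun u : EuclideanSpace ℝ (Fin d) => u i) = gaussianReal 0 1 := by
  have hmeas : Measurable (fun u : EuclideanSpace ℝ (Fin d) => u i) :=
    (measurable_pi_apply i).comp (WithLp.measurable_ofLp 2 _)
  ext s hs
  rw [Measure.map_apply hmeas hs, _root_.stdGaussian,
    Measure.map_apply (WithLp.measurable_toLp 2 _) (hmeas hs)]
  have hpre : WithLp.toLp 2 ⁻¹' ((fun u : EuclideanSpace ℝ (Fin d) => u i) ⁻¹' s)
      = Set.univ.pi (Function.update (fun _ : Fin d => (Set.univ : Set ℝ)) i s) :=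
    Set.eval_preimage
  rw [hpre]
  erw [Measure.pi_pi]
  refine (Finset.prod_eq_single_of_mem i (Finset.mem_univ i) fun b _ hb => ?_).trans ?_
  · rw [Function.update_of_ne hb]
    exact measure_univ
  · rw [Function.update_self]

open ProbabilityTheory in
lemma coord_abs_integrable (d : ℕ) (i : Fin d) :
    Integrable (fun u : EuclideanSpace ℝ (Fin d) => |u i|) (stdGaussian d) := by
  have hmeas : Measurable (fun u : EuclideanSpace ℝ (Fin d) => u i) :=
    (measurable_pi_apply i).comp (WithLp.measurable_ofLp 2 _)
  have h := gaussian_abs_integrable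
  rw [← stdGaussian_map_eval d i] at h
  exact (integrable_map_measure measurable_abs.aestronglyMeasurable
    hmeas.aemeasurable).mp h

open ProbabilityTheory in
lemma coord_abs_integral_le (d : ℕ) (i : Fin d) :
    ∫ u, |u i| ∂(stdGaussian d) ≤ 2 := by
  have hmeas : Measurable (fun u : EuclideanSpace ℝ (Fin d) => u i) :=
    (measurable_pi_apply i).comp (WithLp.measurable_ofLp 2 _)
  have h := integral_map (μ := stdGaussian d)
    (φ := fun u : EuclideanSpace ℝ (Fin d) => u i) hmeas.aemeasurable
    (f := fun x : ℝ => |x|) measurable_abs.aestronglyMeasurable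
  rw [stdGaussian_map_eval d i] at h
  rw [← h]
  exact gaussian_abs_integral_le

lemma norm_le_sum_abs {d : ℕ} (u : EuclideanSpace ℝ (Fin d)) :
    ‖u‖ ≤ ∑ i, |u i| := by
  rw [EuclideanSpace.norm_eq]
  have h1 : ∑ i, ‖u i‖ ^ 2 ≤ (∑ i, |u i|) ^ 2 := by
    simp only [Real.norm_eq_abs]
    exact Finset.sum_sq_le_sq_sum_of_nonneg (fun i _ => abs_nonneg _)
  calc √(∑ i, ‖u i‖ ^ 2) ≤ √((∑ i, |u i|) ^ 2) := Real.sqrt_le_sqrt h1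
    _ = ∑ i, |u i| := Real.sqrt_sq (Finset.sum_nonneg fun i _ => abs_nonneg _)

lemma stdGaussian_norm_integrable (d : ℕ) :
    Integrable (fun u : EuclideanSpace ℝ (Fin d) => ‖u‖) (stdGaussian d) := by
  refine Integrable.mono'
    (integrable_finset_sum Finset.univ (fun i _ => coord_abs_integrable d i))
    continuous_norm.aestronglyMeasurable ?_
  refine Filter.Eventually.of_forall fun u => ?_
  rw [norm_norm]
  exact norm_le_sum_abs u

lemma stdGaussian_norm_integral_le (d : ℕ) :
    ∫ u, ‖u‖ ∂(stdGaussian d) ≤ 2 * d := by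
  calc ∫ u, ‖u‖ ∂(stdGaussian d)
      ≤ ∫ u, ∑ i, |u i| ∂(stdGaussian d) :=
        integral_mono (stdGaussian_norm_integrable d)
          (integrable_finset_sum Finset.univ (fun i _ => coord_abs_integrable d i))
          (fun u => norm_le_sum_abs u)
    _ = ∑ i : Fin d, ∫ u, |u i| ∂(stdGaussian d) :=
        integral_finset_sum Finset.univ (fun i _ => coord_abs_integrable d i)
    _ ≤ ∑ _i : Fin d, (2:ℝ) :=
        Finset.sum_le_sum (fun i _ => coord_abs_integral_le d i)
    _ = 2 * d := by simp [mul_comm]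

lemma gradient_lipschitz_continuous {d : ℕ} {L : ℝ} (hL : 0 ≤ L)
    {φ : EuclideanSpace ℝ (Fin d) → ℝ}
    (hlip : ∀ x y, ‖gradient φ x - gradient φ y‖ ≤ L * ‖x - y‖) :
    Continuous (gradient φ) := by
  have h : LipschitzWith (Real.toNNReal L) (gradient φ) := by
    apply LipschitzWith.of_dist_le_mul
    intro x y
    rw [dist_eq_norm, dist_eq_norm]
    simpa [Real.coe_toNNReal L hL] using hlip x y
  exact h.continuous

lemma taylor_like_bound {d : ℕ} {L : ℝ} (hL : 0 ≤ L)
    {φ : EuclideanSpace ℝ (Fin d) → ℝ}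
    (hdiff : Differentiable ℝ φ)
    (hlip : ∀ x y, ‖gradient φ x - gradient φ y‖ ≤ L * ‖x - y‖)
    (a b : EuclideanSpace ℝ (Fin d)) :
    |φ b - φ a - ⟪gradient φ a, b - a⟫| ≤ L / 2 * ‖b - a‖ ^ 2 := by
  set v := b - a with hv
  have hgc : Continuous (gradient φ) := gradient_lipschitz_continuous hL hlip
  have hline : ∀ t : ℝ, HasDerivAt (fun t : ℝ => a + t • v) v t := by
    intro t
    simpa using ((hasDerivAt_id t).smul_const v).const_add a
  have hderiv : ∀ t : ℝ,
      HasDerivAt (fun t : ℝ => φ (a + t • v)) ⟪gradient φ (a + t • v), v⟫ t := by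
    intro t
    have h1 : HasFDerivAt φ
        ((InnerProductSpace.toDual ℝ _) (gradient φ (a + t • v))) (a + t • v) :=
      hasGradientAt_iff_hasFDerivAt.mp (hdiff _).hasGradientAt
    have h2 := h1.comp_hasDerivAt t (hline t)
    rw [InnerProductSpace.toDual_apply_apply] at h2
    exact h2
  have hcont : Continuous (fun t : ℝ => ⟪gradient φ (a + t • v), v⟫) := by
    have hc : Continuous (fun t : ℝ => gradient φ (a + t • v)) :=
      hgc.comp (Continuous.add continuous_const (continuous_id.smul continuous_const))
    exact hc.inner continuous_const
  have hInt : ∫ t in (0:ℝ)..1, ⟪gradient φ (a + t • v), v⟫ = φ b - φ a := by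
    have h := intervalIntegral.integral_eq_sub_of_hasDerivAt
      (f := fun t : ℝ => φ (a + t • v))
      (fun t _ => hderiv t) (hcont.intervalIntegrable 0 1)
    have e1 : a + (1:ℝ) • v = b := by rw [one_smul, hv]; abel
    have e0 : a + (0:ℝ) • v = a := by rw [zero_smul, add_zero]
    rw [h]
    rw [e1, e0]
  have key : φ b - φ a - ⟪gradient φ a, v⟫
      = ∫ t in (0:ℝ)..1, (⟪gradient φ (a + t • v), v⟫ - ⟪gradient φ a, v⟫) := by
    rw [intervalIntegral.integral_sub (hcont.intervalIntegrable 0 1)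
      (intervalIntegrable_const), hInt, intervalIntegral.integral_const]
    simp
  rw [key]
  have hb : ∀ t ∈ Set.Icc (0:ℝ) 1,
      |⟪gradient φ (a + t • v), v⟫ - ⟪gradient φ a, v⟫| ≤ L * ‖v‖ ^ 2 * t := by
    intro t ht
    have heq : ⟪gradient φ (a + t • v), v⟫ - ⟪gradient φ a, v⟫
        = ⟪gradient φ (a + t • v) - gradient φ a, v⟫ := (inner_sub_left _ _ _).symm
    rw [heq]
    calc |⟪gradient φ (a + t • v) - gradient φ a, v⟫|
        ≤ ‖gradient φ (a + t • v) - gradient φ a‖ * ‖v‖ := abs_real_inner_le_norm _ _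
      _ ≤ (L * ‖a + t • v - a‖) * ‖v‖ :=
          mul_le_mul_of_nonneg_right (hlip _ _) (norm_nonneg v)
      _ = L * ‖v‖ ^ 2 * t := by
          rw [add_sub_cancel_left, norm_smul, Real.norm_eq_abs, abs_of_nonneg ht.1]
          ring
  have habs : |∫ t in (0:ℝ)..1, (⟪gradient φ (a + t • v), v⟫ - ⟪gradient φ a, v⟫)|
      ≤ ∫ t in (0:ℝ)..1, |⟪gradient φ (a + t • v), v⟫ - ⟪gradient φ a, v⟫| := by
    simpa [Real.norm_eq_abs] using
      intervalIntegral.norm_integral_le_integral_norm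
        (f := fun t : ℝ => ⟪gradient φ (a + t • v), v⟫ - ⟪gradient φ a, v⟫)
        (μ := volume) (zero_le_one)
  have hmono : ∫ t in (0:ℝ)..1, |⟪gradient φ (a + t • v), v⟫ - ⟪gradient φ a, v⟫|
      ≤ ∫ t in (0:ℝ)..1, L * ‖v‖ ^ 2 * t := by
    apply intervalIntegral.integral_mono_on zero_le_one
    · exact ((hcont.sub continuous_const).abs).intervalIntegrable 0 1
    · exact (Continuous.intervalIntegrable (by continuity) 0 1)
    · exact hb
  have hval : ∫ t in (0:ℝ)..1, L * ‖v‖ ^ 2 * t = L / 2 * ‖v‖ ^ 2 := by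
    rw [intervalIntegral.integral_const_mul, integral_id]
    ring
  calc |∫ t in (0:ℝ)..1, (⟪gradient φ (a + t • v), v⟫ - ⟪gradient φ a, v⟫)|
      ≤ ∫ t in (0:ℝ)..1, |⟪gradient φ (a + t • v), v⟫ - ⟪gradient φ a, v⟫| := habs
    _ ≤ ∫ t in (0:ℝ)..1, L * ‖v‖ ^ 2 * t := hmono
    _ = L / 2 * ‖v‖ ^ 2 := hval

lemma smoothed_grad_integrable {d : ℕ} {L μ : ℝ} (hL : 0 ≤ L) (hμ : 0 < μ)
    {φ : EuclideanSpace ℝ (Fin d) → ℝ}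
    (hlip : ∀ x y, ‖gradient φ x - gradient φ y‖ ≤ L * ‖x - y‖)
    (a : EuclideanSpace ℝ (Fin d)) :
    Integrable (fun u : EuclideanSpace ℝ (Fin d) => gradient φ (a + μ • u))
      (stdGaussian d) := by
  have hgc : Continuous (gradient φ) := gradient_lipschitz_continuous hL hlip
  refine Integrable.mono'
    ((integrable_const ‖gradient φ a‖).add ((stdGaussian_norm_integrable d).const_mul (μ * L)))
    ((hgc.comp (continuous_const.add (continuous_const_smul μ))).aestronglyMeasurable) ?_
  refine Filter.Eventually.of_forall fun u => ?_
  have h1 : ‖gradient φ (a + μ • u) - gradient φ a‖ ≤ L * ‖a + μ • u - a‖ := hlip _ _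
  have h2 : ‖a + μ • u - a‖ = μ * ‖u‖ := by
    rw [add_sub_cancel_left, norm_smul, Real.norm_eq_abs, abs_of_pos hμ]
  calc ‖gradient φ (a + μ • u)‖
      ≤ ‖gradient φ a‖ + ‖gradient φ (a + μ • u) - gradient φ a‖ := by
        simpa using norm_add_le (gradient φ a) (gradient φ (a + μ • u) - gradient φ a)
    _ ≤ ‖gradient φ a‖ + μ * L * ‖u‖ := by
        rw [h2] at h1; nlinarith [h1]

set_option maxHeartbeats 1000000 in
lemma smoothed_grad_bound {d : ℕ} {L μ : ℝ} (hL : 0 ≤ L) (hμ : 0 < μ)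
    {φ : EuclideanSpace ℝ (Fin d) → ℝ}
    (hlip : ∀ x y, ‖gradient φ x - gradient φ y‖ ≤ L * ‖x - y‖)
    (a : EuclideanSpace ℝ (Fin d)) :
    ‖(∫ u, gradient φ (a + μ • u) ∂(stdGaussian d)) - gradient φ a‖
      ≤ μ * L * (2 * d) := by
  have hFint := smoothed_grad_integrable hL hμ hlip a
  have hconst : ∫ _u : EuclideanSpace ℝ (Fin d), gradient φ a ∂(stdGaussian d)
      = gradient φ a := by
    simp
  have hdiffeq : (∫ u, gradient φ (a + μ • u) ∂(stdGaussian d)) - gradient φ a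
      = ∫ u, (gradient φ (a + μ • u) - gradient φ a) ∂(stdGaussian d) := by
    rw [integral_sub hFint (integrable_const _), hconst]
  rw [hdiffeq]
  have hptw : ∀ u : EuclideanSpace ℝ (Fin d),
      ‖gradient φ (a + μ • u) - gradient φ a‖ ≤ μ * L * ‖u‖ := by
    intro u
    have h1 := hlip (a + μ • u) a
    have h2 : ‖a + μ • u - a‖ = μ * ‖u‖ := by
      rw [add_sub_cancel_left, norm_smul, Real.norm_eq_abs, abs_of_pos hμ]
    rw [h2] at h1
    nlinarith [h1]
  calc ‖∫ u, (gradient φ (a + μ • u) - gradient φ a) ∂(stdGaussian d)‖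
      ≤ ∫ u, ‖gradient φ (a + μ • u) - gradient φ a‖ ∂(stdGaussian d) :=
        norm_integral_le_integral_norm _
    _ ≤ ∫ u, μ * L * ‖u‖ ∂(stdGaussian d) :=
        integral_mono (hFint.sub (integrable_const _)).norm
          ((stdGaussian_norm_integrable d).const_mul (μ * L)) hptw
    _ = μ * L * ∫ u, ‖u‖ ∂(stdGaussian d) := integral_const_mul _ _
    _ ≤ μ * L * (2 * d) := by
        have := stdGaussian_norm_integral_le d
        have hμL : 0 ≤ μ * L := mul_nonneg hμ.le hL
        nlinarith [this, hμL]

set_option maxHeartbeats 1000000 in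
/-- **Proposition 2 (the region formed by finitely many zeroth-order cuts is a relaxation
of the original feasible region).**  For cut-generation points `w 1, …, w m` with
Gaussian-smoothed gradients `g l`, the original feasible region `{x | φ x = 0}` is contained
in the intersection of the half-sets cut out by the zeroth-order cuts. -/
theorem zeroth_order_cuts_relaxation
    (d m : ℕ) (L μ ε : ℝ) (hL : 0 ≤ L) (hμ : 0 < μ) (hε : 0 ≤ ε)
    (φ : EuclideanSpace ℝ (Fin d) → ℝ)
    (hdiff : Differentiable ℝ φ)
    (hlip : ∀ x y, ‖gradient φ x - gradient φ y‖ ≤ L * ‖x - y‖)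
    (w : Fin m → EuclideanSpace ℝ (Fin d))
    (g : Fin m → EuclideanSpace ℝ (Fin d))
    (hg : ∀ l : Fin m, g l = ∫ u, gradient φ (w l + μ • u) ∂(stdGaussian d)) :
    {x : EuclideanSpace ℝ (Fin d) | φ x = 0} ⊆
      ⋂ l : Fin m, {x : EuclideanSpace ℝ (Fin d) |
        φ (w l) + ⟪g l, x - w l⟫ - (L + 1) / 2 * ‖x - w l‖ ^ 2
          - μ ^ 2 / 8 * L ^ 2 * ((d : ℝ) + 3) ^ 3 ≤ ε} := by
  intro x hx
  simp only [Set.mem_setOf_eq] at hx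
  simp only [Set.mem_iInter, Set.mem_setOf_eq]
  intro l
  set G := gradient φ (w l) with hG
  set A := ‖x - w l‖ with hA
  set B := ‖g l - G‖ with hB
  have hA0 : 0 ≤ A := norm_nonneg _
  have hB0 : 0 ≤ B := norm_nonneg _
  -- Taylor-type bound
  have htaylor := taylor_like_bound hL hdiff hlip (w l) x
  have h1 : φ (w l) + ⟪G, x - w l⟫ ≤ L / 2 * A ^ 2 := by
    have := (abs_le.mp htaylor).1
    rw [hx] at this
    linarith
  -- inner product decomposition
  have hdec : ⟪g l, x - w l⟫ = ⟪G, x - w l⟫ + ⟪g l - G, x - w l⟫ := by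
    rw [inner_sub_left]; ring
  have h2 : ⟪g l - G, x - w l⟫ ≤ B * A := real_inner_le_norm _ _
  -- smoothed gradient bound
  have h3 : B ≤ μ * L * (2 * d) := by
    rw [hB, hG, hg l]
    exact smoothed_grad_bound hL hμ hlip (w l)
  have h3sq : B ^ 2 ≤ (μ * L * (2 * d)) ^ 2 := by
    have hn : 0 ≤ μ * L * (2 * d) := by positivity
    nlinarith [h3, hB0]
  -- dimension inequality
  have hd : 16 * (d : ℝ) ^ 2 ≤ ((d : ℝ) + 3) ^ 3 := by
    have hd0 : (0:ℝ) ≤ (d : ℝ) := Nat.cast_nonneg d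
    nlinarith [mul_nonneg hd0 (sq_nonneg ((d : ℝ) - 6)), sq_nonneg ((d : ℝ) - 9/10), hd0]
  have hkey : μ ^ 2 * L ^ 2 * (16 * (d : ℝ) ^ 2) ≤ μ ^ 2 * L ^ 2 * ((d : ℝ) + 3) ^ 3 := by
    apply mul_le_mul_of_nonneg_left hd (by positivity)
  have hamgm : B * A ≤ B ^ 2 / 2 + A ^ 2 / 2 := by nlinarith [sq_nonneg (B - A)]
  have hB2 : B ^ 2 ≤ 4 * μ ^ 2 * L ^ 2 * (d : ℝ) ^ 2 := by nlinarith [h3sq]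
  rw [hdec]
  nlinarith [h1, h2, hamgm, hB2, hkey, hε]
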